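/- For any proper 3-colouring c of G and any unit vector x, the set of unit vectors orthogonal to x is coloured using exactly the two colours different from c(x): no vector orthogonal to x has colour c(x), and each of the other two colours occurs on some unit vector orthogonal to x. -/

import Mathlib

open scoped RealInnerProductSpace

open Submodule Module in
lemma exists_two_orthonormal_orthogonal (x : EuclideanSpace ℝ (Fin 3)) (hx : ‖x‖ = 1) :
    ∃ u v : EuclideanSpace ℝ (Fin 3), ‖u‖ = 1 ∧ ‖v‖ = 1 ∧
      ⟪x, u⟫ = 0 ∧ ⟪x, v⟫ = 0 ∧ ⟪u, v⟫ = 0 := by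
  set K := (ℝ ∙ x)ᗮ with hK
  have hdim : finrank ℝ K = 2 := by
    have hx0 : x ≠ 0 := by intro h; rw [h, norm_zero] at hx; norm_num at hx
    have h1 : finrank ℝ (ℝ ∙ x) = 1 := finrank_span_singleton hx0
    have h2 := Submodule.finrank_add_finrank_orthogonal (K := ℝ ∙ x)
    rw [← hK] at h2
    have h3 : finrank ℝ (EuclideanSpace ℝ (Fin 3)) = 3 := finrank_euclideanSpace_fin
    omega
  let b := stdOrthonormalBasis ℝ K
  have h01 : (⟨0, by omega⟩ : Fin (finrank ℝ K)) ≠ ⟨1, by omega⟩ := by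
    simp [Fin.ext_iff]
  refine ⟨(b ⟨0, by omega⟩ : K), (b ⟨1, by omega⟩ : K), ?_, ?_, ?_, ?_, ?_⟩
  · exact b.orthonormal.1 ⟨0, by omega⟩
  · exact b.orthonormal.1 ⟨1, by omega⟩
  · exact ((Submodule.mem_orthogonal _ _).1 (b ⟨0, by omega⟩).2 x
      (Submodule.mem_span_singleton_self x))
  · exact ((Submodule.mem_orthogonal _ _).1 (b ⟨1, by omega⟩).2 x
      (Submodule.mem_span_singleton_self x))
  · have := b.orthonormal.2 h01
    exact this

/-- For any proper 3-colouring of the orthogonality graph on the unit sphere in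
`ℝ³` and any unit vector `x`, the unit vectors orthogonal to `x` are coloured
with exactly the two colours different from `c x`. -/
theorem orthogonal_circle_two_colours
    (c : {x : EuclideanSpace ℝ (Fin 3) // ‖x‖ = 1} → Fin 3)
    (hc : ∀ u v : {x : EuclideanSpace ℝ (Fin 3) // ‖x‖ = 1},
      ⟪(u : EuclideanSpace ℝ (Fin 3)), (v : EuclideanSpace ℝ (Fin 3))⟫ = 0 →
        c u ≠ c v)
    (x : {x : EuclideanSpace ℝ (Fin 3) // ‖x‖ = 1}) :
    (∀ y : {x : EuclideanSpace ℝ (Fin 3) // ‖x‖ = 1},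
        ⟪(x : EuclideanSpace ℝ (Fin 3)), (y : EuclideanSpace ℝ (Fin 3))⟫ = 0 →
          c y ≠ c x) ∧
    (∀ k : Fin 3, k ≠ c x →
      ∃ y : {x : EuclideanSpace ℝ (Fin 3) // ‖x‖ = 1},
        ⟪(x : EuclideanSpace ℝ (Fin 3)), (y : EuclideanSpace ℝ (Fin 3))⟫ = 0 ∧
          c y = k) := by
  constructor
  · intro y hy
    exact (hc x y hy).symm
  · intro k hk
    obtain ⟨u, v, hu, hv, hxu, hxv, huv⟩ :=
      exists_two_orthonormal_orthogonal (x : EuclideanSpace ℝ (Fin 3)) x.2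
    set yu : {x : EuclideanSpace ℝ (Fin 3) // ‖x‖ = 1} := ⟨u, hu⟩
    set yv : {x : EuclideanSpace ℝ (Fin 3) // ‖x‖ = 1} := ⟨v, hv⟩
    have h1 : c yu ≠ c x := (hc x yu hxu).symm
    have h2 : c yv ≠ c x := (hc x yv hxv).symm
    have h3 : c yu ≠ c yv := hc yu yv huv
    have hk2 : k = c yu ∨ k = c yv := by
      revert hk h1 h2 h3
      have := (c yu).isLt; have := (c yv).isLt; have := (c x).isLt; have := k.isLt
      simp only [Fin.ne_iff_vne, Fin.ext_iff]
      omega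
    rcases hk2 with h | h
    · exact ⟨yu, hxu, h.symm⟩
    · exact ⟨yv, hxv, h.symm⟩
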